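/- arXiv:1309.3884 — 2 statements merged into one kernel-verified Lean document; each statement's English description precedes it below -/
import Mathlib

section
/- If the monoid S_{n,l}(H) is cancellative, then H is abelian. -/
/-- The rewriting relation for the permutation-relation monoid `S_{n,l}(H)`. -/
def permRel (n l : ℕ) (H : Subgroup (Equiv.Perm (Fin n))) :
    FreeMonoid (Fin n) → FreeMonoid (Fin n) → Prop := fun a b =>
  ∃ σ ∈ H, ∃ w : Fin l → Fin n,
    a = FreeMonoid.ofList (List.ofFn fun i => w i) ∧
    b = FreeMonoid.ofList (List.ofFn fun i => σ (w i))

/-- The congruence on the free monoid generated by the permutation relations. -/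
def permCon (n l : ℕ) (H : Subgroup (Equiv.Perm (Fin n))) : Con (FreeMonoid (Fin n)) :=
  conGen (permRel n l H)

/-- The monoid `S_{n,l}(H)`. -/
abbrev SM (n l : ℕ) (H : Subgroup (Equiv.Perm (Fin n))) := (permCon n l H).Quotient

/-- The generator `x_i` of `S_{n,l}(H)`. -/
def xg (n l : ℕ) (H : Subgroup (Equiv.Perm (Fin n))) (i : Fin n) : SM n l H :=
  (permCon n l H).mk' (FreeMonoid.of i)

/-- The length-based congruence used as an invariant: two words are related iff they have
the same length, and words of length `< l` are only related to themselves. -/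
def lenCon (n l : ℕ) : Con (FreeMonoid (Fin n)) where
  r a b := a.toList.length = b.toList.length ∧ (a.toList.length < l → a = b)
  iseqv := ⟨fun _ => ⟨rfl, fun _ => rfl⟩,
    fun h => ⟨h.1.symm, fun hl => (h.2 (h.1 ▸ hl)).symm⟩,
    fun h1 h2 => ⟨h1.1.trans h2.1, fun hl => (h1.2 hl).trans (h2.2 (h1.1 ▸ hl))⟩⟩
  mul' := by
    intro w x y z h1 h2
    constructor
    · simp [FreeMonoid.toList_mul, h1.1, h2.1]
    · intro hlen
      simp only [FreeMonoid.toList_mul, List.length_append] at hlen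
      rw [h1.2 (by omega), h2.2 (by omega)]

theorem permCon_le_lenCon (n l : ℕ) (H : Subgroup (Equiv.Perm (Fin n))) :
    permCon n l H ≤ lenCon n l := by
  apply Con.conGen_le.mpr
  rintro a b ⟨σ, -, w, rfl, rfl⟩
  constructor
  · simp [FreeMonoid.toList_ofList]
  · intro hlen
    simp [FreeMonoid.toList_ofList] at hlen

theorem abelian_of_cancellative (n l : ℕ) (hl : 2 ≤ l) (H : Subgroup (Equiv.Perm (Fin n)))
    (hc : IsCancelMul (SM n l H)) :
    ∀ σ ∈ H, ∀ τ ∈ H, σ * τ = τ * σ := by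
  haveI : IsCancelMul (SM n l H) := hc
  obtain ⟨m, rfl⟩ : ∃ m, l = m + 1 := ⟨l - 1, by omega⟩
  have hm : 1 ≤ m := by omega
  intro σ hσ τ hτ
  ext j
  simp only [Equiv.Perm.coe_mul, Function.comp_apply]
  -- goal : σ (τ j) = τ (σ j)
  set C := permCon n (m + 1) H with hC
  -- Two families of relation instances
  have K1 : ∀ π ∈ H, ∀ a b : Fin n,
      C (FreeMonoid.ofList (a :: List.replicate m b))
        (FreeMonoid.ofList (π a :: List.replicate m (π b))) := by
    intro π hπ a b
    apply ConGen.Rel.of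
    refine ⟨π, hπ, Fin.cons a (fun _ => b), ?_, ?_⟩ <;>
      simp [List.ofFn_succ, List.ofFn_const]
  have K2 : ∀ π ∈ H, ∀ a b : Fin n,
      C (FreeMonoid.ofList (List.replicate m a ++ [b]))
        (FreeMonoid.ofList (List.replicate m (π a) ++ [π b])) := by
    intro π hπ a b
    apply ConGen.Rel.of
    refine ⟨π, hπ, Fin.snoc (fun _ => a) b, ?_, ?_⟩ <;>
      simp only [List.ofFn_succ', Fin.snoc_castSucc, Fin.snoc_last, List.ofFn_const,
        List.concat_eq_append]
  -- the two rewriting paths starting from x_j^{l+1}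
  have path1 : C (FreeMonoid.of j * FreeMonoid.ofList (List.replicate m j ++ [j]))
      (FreeMonoid.ofList (σ j :: List.replicate m (σ (τ j))) * FreeMonoid.of (τ j)) := by
    have s1 : C (FreeMonoid.of j * FreeMonoid.ofList (List.replicate m j ++ [j]))
        (FreeMonoid.of j * FreeMonoid.ofList (List.replicate m (τ j) ++ [τ j])) :=
      C.mul (C.refl _) (K2 τ hτ j j)
    have e1 : FreeMonoid.of j * FreeMonoid.ofList (List.replicate m (τ j) ++ [τ j])
        = FreeMonoid.ofList (j :: List.replicate m (τ j)) * FreeMonoid.of (τ j) := by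
      rfl
    have s2 : C (FreeMonoid.ofList (j :: List.replicate m (τ j)) * FreeMonoid.of (τ j))
        (FreeMonoid.ofList (σ j :: List.replicate m (σ (τ j))) * FreeMonoid.of (τ j)) :=
      C.mul (K1 σ hσ j (τ j)) (C.refl _)
    exact (e1 ▸ s1).trans s2
  have path2 : C (FreeMonoid.of j * FreeMonoid.ofList (List.replicate m j ++ [j]))
      (FreeMonoid.of (σ j) * FreeMonoid.ofList (List.replicate m (τ (σ j)) ++ [τ j])) := by
    have e0 : FreeMonoid.of j * FreeMonoid.ofList (List.replicate m j ++ [j])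
        = FreeMonoid.ofList (j :: List.replicate m j) * FreeMonoid.of j := by
      rfl
    have s1 : C (FreeMonoid.ofList (j :: List.replicate m j) * FreeMonoid.of j)
        (FreeMonoid.ofList (σ j :: List.replicate m (σ j)) * FreeMonoid.of j) :=
      C.mul (K1 σ hσ j j) (C.refl _)
    have e1 : FreeMonoid.ofList (σ j :: List.replicate m (σ j)) * FreeMonoid.of j
        = FreeMonoid.of (σ j) * FreeMonoid.ofList (List.replicate m (σ j) ++ [j]) := by
      rfl
    have s2 : C (FreeMonoid.of (σ j) * FreeMonoid.ofList (List.replicate m (σ j) ++ [j]))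
        (FreeMonoid.of (σ j) * FreeMonoid.ofList (List.replicate m (τ (σ j)) ++ [τ j])) :=
      C.mul (C.refl _) (K2 τ hτ (σ j) j)
    exact e0 ▸ ((s1.trans (e1 ▸ C.refl _)).trans s2)
  -- combine: two congruent words of shape  (σ j) ⬝ u ⬝ (τ j)
  have comb : C (FreeMonoid.of (σ j) * FreeMonoid.ofList (List.replicate m (σ (τ j)))
        * FreeMonoid.of (τ j))
      (FreeMonoid.of (σ j) * FreeMonoid.ofList (List.replicate m (τ (σ j)))
        * FreeMonoid.of (τ j)) := by
    have e2 : FreeMonoid.ofList (σ j :: List.replicate m (σ (τ j))) * FreeMonoid.of (τ j)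
        = FreeMonoid.of (σ j) * FreeMonoid.ofList (List.replicate m (σ (τ j)))
          * FreeMonoid.of (τ j) := by
      rw [FreeMonoid.ofList_cons]
    have e3 : FreeMonoid.of (σ j) * FreeMonoid.ofList (List.replicate m (τ (σ j)) ++ [τ j])
        = FreeMonoid.of (σ j) * FreeMonoid.ofList (List.replicate m (τ (σ j)))
          * FreeMonoid.of (τ j) := by
      rw [FreeMonoid.ofList_append, FreeMonoid.ofList_singleton, mul_assoc]
    exact (e2 ▸ path1.symm).trans (e3 ▸ path2)
  -- pass to the quotient and cancel
  have q : ((FreeMonoid.of (σ j) * FreeMonoid.ofList (List.replicate m (σ (τ j)))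
        * FreeMonoid.of (τ j) : FreeMonoid (Fin n)) : SM n (m + 1) H)
      = ((FreeMonoid.of (σ j) * FreeMonoid.ofList (List.replicate m (τ (σ j)))
        * FreeMonoid.of (τ j) : FreeMonoid (Fin n)) : SM n (m + 1) H) := C.eq.mpr comb
  simp only [Con.coe_mul] at q
  have q2 : ((FreeMonoid.ofList (List.replicate m (σ (τ j))) : FreeMonoid (Fin n))
        : SM n (m + 1) H)
      = ((FreeMonoid.ofList (List.replicate m (τ (σ j))) : FreeMonoid (Fin n))
        : SM n (m + 1) H) :=
    mul_left_cancel (mul_right_cancel q)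
  have q3 : C (FreeMonoid.ofList (List.replicate m (σ (τ j))))
      (FreeMonoid.ofList (List.replicate m (τ (σ j)))) := C.eq.mp q2
  have q4 := (permCon_le_lenCon n (m + 1) H q3).2 (by simp [FreeMonoid.toList_ofList])
  have q5 : List.replicate m (σ (τ j)) = List.replicate m (τ (σ j)) :=
    FreeMonoid.ofList.injective q4
  obtain ⟨k, rfl⟩ : ∃ k, m = k + 1 := ⟨m - 1, by omega⟩
  rw [List.replicate_succ, List.replicate_succ] at q5
  injection q5 with h1 h2
  exact congrArg Fin.val h1
end

section
/- Let H be a non-transitive subgroup of Sym_n and K a field. Then the semigroup algebra K[S_{n,l}(H)] contains a free subalgebra of rank at least 2, and hence has exponential growth. -/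
/-- The span of (the images in the monoid algebra of) all words of length at most `m`,
used to measure the growth of `K[S_{n,l}(H)]`. -/
noncomputable def spanV (K : Type) [Field K] (n l : ℕ) (H : Subgroup (Equiv.Perm (Fin n))) (m : ℕ) :
    Submodule K (MonoidAlgebra K (SM n l H)) :=
  Submodule.span K ((fun w : List (Fin n) =>
    (MonoidAlgebra.of K (SM n l H)) ((List.map (xg n l H) w).prod)) '' {w | w.length ≤ m})

lemma prod_map_xg (n l : ℕ) (H : Subgroup (Equiv.Perm (Fin n))) (w : List (Fin n)) :
    (List.map (xg n l H) w).prod = (permCon n l H).mk' (FreeMonoid.ofList w) := by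
  induction w with
  | nil => simp [FreeMonoid.ofList]; rfl
  | cons a t ih =>
    rw [List.map_cons, List.prod_cons, ih, FreeMonoid.ofList_cons, map_mul]
    rfl

/-- orbit indicator -/
def orbP {n : ℕ} (H : Subgroup (Equiv.Perm (Fin n))) (i : Fin n) (k : Fin n) : Prop :=
  ∃ σ ∈ H, σ i = k

lemma orbP_invariant {n : ℕ} {H : Subgroup (Equiv.Perm (Fin n))} {i : Fin n}
    {σ : Equiv.Perm (Fin n)} (hσ : σ ∈ H) (k : Fin n) :
    orbP H i (σ k) = orbP H i k := by
  unfold orbP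
  apply propext
  constructor
  · rintro ⟨τ, hτ, h⟩
    exact ⟨σ⁻¹ * τ, mul_mem (inv_mem hσ) hτ, by simp [h]⟩
  · rintro ⟨τ, hτ, h⟩
    exact ⟨σ * τ, mul_mem hσ hτ, by simp [h]⟩

/-- the orbit-pattern monoid hom out of `SM`. -/
noncomputable def patternHom (n l : ℕ) (H : Subgroup (Equiv.Perm (Fin n))) (i : Fin n) :
    SM n l H →* FreeMonoid Prop :=
  Con.lift _ (FreeMonoid.map (orbP H i)) (by
    rw [permCon]
    refine Con.conGen_le.mpr fun a b hab => ?_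
    obtain ⟨σ, hσ, w, ha, hb⟩ := hab
    subst ha hb
    show FreeMonoid.map (orbP H i) _ = FreeMonoid.map (orbP H i) _
    apply FreeMonoid.toList.injective
    simp only [FreeMonoid.toList_map, FreeMonoid.toList_ofList, List.map_ofFn]
    congr 1
    funext k
    exact (orbP_invariant hσ (w k)).symm)

theorem exponential_growth_of_nontransitive (n l : ℕ) (hl : 2 ≤ l) (H : Subgroup (Equiv.Perm (Fin n)))
    (hnt : ¬ ∀ i j : Fin n, ∃ σ ∈ H, σ i = j)
    (K : Type) [Field K] :
    (∃ f : FreeAlgebra K (Fin 2) →ₐ[K] MonoidAlgebra K (SM n l H), Function.Injective f) ∧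
    ∀ m : ℕ, 2 ^ m ≤ Module.finrank K (spanV K n l H m) := by
  push_neg at hnt
  obtain ⟨i, j, hij⟩ := hnt
  set c : Fin 2 → Fin n := ![i, j] with hc
  set g : FreeMonoid (Fin 2) →* SM n l H :=
    ((permCon n l H).mk').comp (FreeMonoid.map c) with hg
  have hne : orbP H i (c 0) ≠ orbP H i (c 1) := by
    have h1 : orbP H i (c 0) := ⟨1, one_mem _, rfl⟩
    have h0 : ¬ orbP H i (c 1) := by
      rintro ⟨σ, hσ, hs⟩
      exact hij σ hσ hs
    intro h
    rw [h] at h1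
    exact h0 h1
  have hocinj : Function.Injective (orbP H i ∘ c) := by
    intro a b hab
    fin_cases a <;> fin_cases b
    · rfl
    · exact absurd hab hne
    · exact absurd hab.symm hne
    · rfl
  have hginj : Function.Injective g := by
    have hcomp : ∀ x, (patternHom n l H i) (g x) = FreeMonoid.map (orbP H i ∘ c) x := by
      intro x
      show Con.lift _ _ _ ((permCon n l H).mk' _) = _
      rw [Con.lift_mk']
      apply FreeMonoid.toList.injective
      simp [FreeMonoid.toList_map, List.map_map]
    have hmapinj : Function.Injective (FreeMonoid.map (orbP H i ∘ c)) := by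
      intro x y hxy
      apply FreeMonoid.toList.injective
      have := congrArg FreeMonoid.toList hxy
      rw [FreeMonoid.toList_map, FreeMonoid.toList_map] at this
      exact List.map_injective_iff.mpr hocinj this
    intro x y hxy
    apply hmapinj
    rw [← hcomp, ← hcomp, hxy]
  constructor
  · refine ⟨(MonoidAlgebra.mapDomainAlgHom K K g).comp
      (FreeAlgebra.equivMonoidAlgebraFreeMonoid (R := K) (X := Fin 2)).toAlgHom, ?_⟩
    intro x y hxy
    simp only [AlgHom.comp_apply, AlgEquiv.toAlgHom_eq_coe, AlgHom.coe_coe,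
      MonoidAlgebra.mapDomainAlgHom_apply] at hxy
    exact (FreeAlgebra.equivMonoidAlgebraFreeMonoid (R := K) (X := Fin 2)).injective
      (MonoidAlgebra.mapDomain_injective hginj hxy)
  · intro m
    set e : (Fin m → Fin 2) → SM n l H :=
      fun t => g (FreeMonoid.ofList (List.ofFn t)) with he
    have heinj : Function.Injective e := by
      intro s t hst
      have h2 : FreeMonoid.ofList (List.ofFn s) = FreeMonoid.ofList (List.ofFn t) :=
        hginj hst
      exact List.ofFn_injective (FreeMonoid.ofList.injective h2)
    set u : (Fin m → Fin 2) → MonoidAlgebra K (SM n l H) :=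
      fun t => MonoidAlgebra.of K (SM n l H) (e t) with hu
    have hli : LinearIndependent K u := by
      have : u = (fun s => (MonoidAlgebra.basis (SM n l H) K : Module.Basis (SM n l H) K
          (MonoidAlgebra K (SM n l H))) s) ∘ e := by
        funext t
        simp [hu, Finsupp.coe_basisSingleOne, MonoidAlgebra.of_apply]
      rw [this]
      exact ((MonoidAlgebra.basis (SM n l H) K).linearIndependent).comp e heinj
    have hmem : ∀ t, u t ∈ spanV K n l H m := by
      intro t
      apply Submodule.subset_span
      refine ⟨List.map c (List.ofFn t), by simp, ?_⟩
      simp only [prod_map_xg]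
      rfl
    have hfin : FiniteDimensional K (spanV K n l H m) := by
      apply FiniteDimensional.span_of_finite
      exact Set.Finite.image _ (List.finite_length_le (Fin n) m)
    have hspan : Submodule.span K (Set.range u) ≤ spanV K n l H m := by
      rw [Submodule.span_le]
      rintro x ⟨t, rfl⟩
      exact hmem t
    calc 2 ^ m = Fintype.card (Fin m → Fin 2) := by simp
      _ ≤ Module.finrank K (Submodule.span K (Set.range u)) := by
          have := linearIndependent_iff_card_le_finrank_span.mp hli
          simpa [Set.finrank] using this
      _ ≤ Module.finrank K (spanV K n l H m) := Submodule.finrank_mono hspan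
end
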